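/- Let σ = σ₁⋯σ_s be a product of polynomials of degrees n₁,…,n_s with n = n₁+⋯+n_s, and let X ⊂ ℂ² be a finite set contained in the zero set of σ that is essentially k-dependent. For i = 1,…,s let X_i be the set of points of X lying on σ_i but on no other component σ_j (j ≠ i). If all X_i are nonempty, then each X_i is essentially (k - n + n_i)-dependent. -/
import Mathlib


open MvPolynomial

abbrev Poly2 := MvPolynomial (Fin 2) ℂ
abbrev Pt := Fin 2 → ℂ

/-- `p` is an `n`-fundamental polynomial of the point `A` with respect to the set `S`. -/
def IsFund (n : ℕ) (S : Finset Pt) (A : Pt) (p : Poly2) : Prop :=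
  p.totalDegree ≤ n ∧ (∀ x ∈ S, x ≠ A → eval x p = 0) ∧ eval A p ≠ 0

/-- A finite point set is `n`-independent if each of its points has an
`n`-fundamental polynomial. -/
def NIndep (n : ℕ) (S : Finset Pt) : Prop := ∀ A ∈ S, ∃ p : Poly2, IsFund n S A p

/-- A finite point set is essentially `k`-dependent if no point has a
`k`-fundamental polynomial. -/
def EssDep (k : ℕ) (S : Finset Pt) : Prop :=
  ∀ A ∈ S, ∀ p : Poly2, p.totalDegree ≤ k →
    (∀ x ∈ S, x ≠ A → eval x p = 0) → eval A p = 0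

theorem stmt7 (k n s : ℕ) (σ : Fin s → Poly2)
    (hn : n = ∑ i, (σ i).totalDegree) (hnk : n ≤ k)
    (X : Finset Pt) (hXσ : ∀ x ∈ X, eval x (∏ i, σ i) = 0)
    (hX : EssDep k X) (Xi : Fin s → Finset Pt)
    (hXi : ∀ i x, x ∈ Xi i ↔
      (x ∈ X ∧ eval x (σ i) = 0 ∧ ∀ j, j ≠ i → eval x (σ j) ≠ 0))
    (hne : ∀ i, (Xi i).Nonempty) :
    ∀ i, EssDep (k - n + (σ i).totalDegree) (Xi i) := by
  intro i A hA p hpd hpv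
  have hAX := (hXi i A).mp hA
  set q : Poly2 := p * ∏ j ∈ Finset.univ.erase i, σ j with hq
  have hni : (σ i).totalDegree ≤ n := by
    rw [hn]; exact Finset.single_le_sum (f := fun j => (σ j).totalDegree) (fun j _ => Nat.zero_le _) (Finset.mem_univ i)
  have hsum : ∑ j ∈ Finset.univ.erase i, (σ j).totalDegree = n - (σ i).totalDegree := by
    have := Finset.add_sum_erase Finset.univ (fun j => (σ j).totalDegree) (Finset.mem_univ i)
    beta_reduce at this
    omega
  have hdeg : q.totalDegree ≤ k := by
    calc q.totalDegree ≤ p.totalDegree + (∏ j ∈ Finset.univ.erase i, σ j).totalDegree :=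
        totalDegree_mul _ _
      _ ≤ (k - n + (σ i).totalDegree) + ∑ j ∈ Finset.univ.erase i, (σ j).totalDegree :=
        Nat.add_le_add hpd (totalDegree_finset_prod _ _)
      _ ≤ k := by rw [hsum]; omega
  have hqv : ∀ x ∈ X, x ≠ A → eval x q = 0 := by
    intro x hx hxA
    rw [hq, map_mul]
    by_cases hall : ∀ j, j ≠ i → eval x (σ j) ≠ 0
    · have hxi : eval x (σ i) = 0 := by
        have := hXσ x hx
        rw [eval_prod] at this
        obtain ⟨j, _, hj⟩ := Finset.prod_eq_zero_iff.mp this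
        by_contra h
        rcases eq_or_ne j i with rfl | hji
        · exact h hj
        · exact hall j hji hj
      have : x ∈ Xi i := (hXi i x).mpr ⟨hx, hxi, hall⟩
      rw [hpv x this hxA, zero_mul]
    · push_neg at hall
      obtain ⟨j, hji, hj⟩ := hall
      rw [eval_prod]
      rw [Finset.prod_eq_zero (Finset.mem_erase.mpr ⟨hji, Finset.mem_univ j⟩) hj, mul_zero]
  have hqA : eval A q = 0 := hX A hAX.1 q hdeg hqv
  rw [hq, map_mul, eval_prod] at hqA
  rcases mul_eq_zero.mp hqA with h | h
  · exact h
  · obtain ⟨j, hj, hjz⟩ := Finset.prod_eq_zero_iff.mp h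
    exact absurd hjz (hAX.2.2 j (Finset.mem_erase.mp hj).1)
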